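/- Let F be a finite field of characteristic 2, let Q be a nonsingular quadratic form on F^n, and let x be an isometry of Q such that x + I is invertible. Then n is even and every isometry y of Q with x·y = y·x has rank(y + I) even. (In particular x ∈ Ω(Q) := {g an isometry of Q : rank(g + I) is even}, the kernel of the spinor norm, and the conjugacy class of x in the orthogonal group of Q splits into two distinct classes in Ω(Q).) -/

import Mathlib

open Matrix

section AuxLemmas

open Module Submodule LinearMap

universe u v

set_option maxHeartbeats 1000000 in
private theorem alt_aux {F : Type v} [Field F] :
    ∀ (k : ℕ) (V : Type u) (_ : AddCommGroup V) (_ : Module F V) (_ : FiniteDimensional F V)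
      (b : V →ₗ[F] V →ₗ[F] F), finrank F V ≤ k → (∀ v, b v v = 0) →
      ∃ m, finrank F V = finrank F (LinearMap.ker b) + 2 * m := by
  intro k
  induction k with
  | zero =>
    intro V _ _ _ b hle _
    refine ⟨0, ?_⟩
    have hV : finrank F V = 0 := Nat.le_zero.mp hle
    have : finrank F (LinearMap.ker b) ≤ finrank F V := Submodule.finrank_le _
    omega
  | succ k ih =>
    intro V _ _ _ b hle halt
    by_cases hz : ∀ u v, b u v = 0
    · refine ⟨0, ?_⟩
      have hker : LinearMap.ker b = ⊤ := by
        rw [LinearMap.ker_eq_top]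
        ext u v
        simp [hz]
      rw [hker, finrank_top]
      omega
    · push_neg at hz
      obtain ⟨u, v, huv⟩ := hz
      have hskew : ∀ a c : V, b a c = - b c a := by
        intro a c
        have h := halt (a + c)
        simp only [map_add, LinearMap.add_apply, halt] at h
        linear_combination h
      set α := b u v with hα
      have hbvu : b v u = -α := by rw [hskew v u]
      set f : V →ₗ[F] F × F := (b u).prod (b v) with hf
      have hfapp : ∀ t, f t = ((b u) t, (b v) t) := fun t => rfl
      have hfsurj : Function.Surjective f := by
        intro p
        obtain ⟨s, t⟩ := p
        refine ⟨(-(t * α⁻¹)) • u + (s * α⁻¹) • v, ?_⟩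
        rw [hfapp]
        simp only [map_add, _root_.map_smul, smul_eq_mul, halt, hbvu, ← hα]
        rw [Prod.mk.injEq]
        constructor
        · field_simp
          simp
        · field_simp
          simp
      have hrange : LinearMap.range f = ⊤ := LinearMap.range_eq_top.mpr hfsurj
      have h2 : finrank F (F × F) = 2 := by
        rw [Module.finrank_prod, finrank_self]
      have hdim : finrank F V = finrank F (LinearMap.ker f) + 2 := by
        have h1 := f.finrank_range_add_finrank_ker
        rw [hrange, finrank_top, h2] at h1
        omega
      set b' : LinearMap.ker f →ₗ[F] LinearMap.ker f →ₗ[F] F :=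
        (b.domRestrict (LinearMap.ker f)).compl₂ (LinearMap.ker f).subtype with hb'
      have hb'apply : ∀ (w z : LinearMap.ker f), b' w z = b (w : V) (z : V) := fun w z => rfl
      have halt' : ∀ w : LinearMap.ker f, b' w w = 0 := fun w => halt _
      have hWle : finrank F (LinearMap.ker f) ≤ k := by omega
      obtain ⟨m, hm⟩ :=
        ih (LinearMap.ker f) inferInstance inferInstance inferInstance b' hWle halt'
      have hmemker : ∀ w : V, w ∈ LinearMap.ker f ↔ (b u w = 0 ∧ b v w = 0) := by
        intro w
        rw [LinearMap.mem_ker, hfapp, Prod.mk.injEq]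
        rfl
      have hkerle : LinearMap.ker b ≤ LinearMap.ker f := by
        intro w hw
        rw [LinearMap.mem_ker] at hw
        rw [hmemker]
        constructor
        · rw [hskew u w, hw]; simp
        · rw [hskew v w, hw]; simp
      have hkerb' : LinearMap.ker b' =
          Submodule.comap (LinearMap.ker f).subtype (LinearMap.ker b) := by
        ext w
        simp only [LinearMap.mem_ker, Submodule.mem_comap, Submodule.coe_subtype]
        constructor
        · intro h
          have hww : ∀ z : LinearMap.ker f, b (w : V) (z : V) = 0 := by
            intro z
            have := congrArg (fun g => g z) h
            simpa [hb'apply] using this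
          obtain ⟨hu1, hv1⟩ := (hmemker (w : V)).mp w.2
          have hwu : b (w : V) u = 0 := by rw [hskew _ u, hu1, neg_zero]
          have hwv : b (w : V) v = 0 := by rw [hskew _ v, hv1, neg_zero]
          ext t
          set c₁ : F := -(b v t * α⁻¹) with hc₁
          set c₂ : F := b u t * α⁻¹ with hc₂
          set z : V := t - c₁ • u - c₂ • v with hz
          have hzW : z ∈ LinearMap.ker f := by
            rw [hmemker]
            constructor
            · simp only [hz, map_sub, _root_.map_smul, smul_eq_mul, halt, hc₂, ← hα]
              field_simp
              simp
            · simp only [hz, map_sub, _root_.map_smul, smul_eq_mul, halt, hbvu, hc₁]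
              field_simp
              simp
          have hdecomp : b (w : V) t = c₁ * b (w : V) u + c₂ * b (w : V) v + b (w : V) z := by
            simp only [hz, map_sub, _root_.map_smul, smul_eq_mul]
            ring
          rw [LinearMap.zero_apply, hdecomp, hwu, hwv, hww ⟨z, hzW⟩]
          ring
        · intro h
          apply LinearMap.ext
          intro z
          have h2' : b (w : V) (z : V) = 0 := by
            have := congrArg (fun g => g (z : V)) h
            simpa using this
          rw [LinearMap.zero_apply, hb'apply]
          exact h2'
      have hfr : finrank F (LinearMap.ker b') = finrank F (LinearMap.ker b) := by
        rw [hkerb']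
        exact LinearEquiv.finrank_eq (Submodule.comapSubtypeEquivOfLe hkerle)
      exact ⟨m + 1, by omega⟩

private theorem orth_dim {F : Type v} {V : Type u} [Field F] [AddCommGroup V] [Module F V]
    [FiniteDimensional F V] (B : V →ₗ[F] Module.Dual F V) (hB : Function.Surjective B)
    (W : Submodule F V) :
    finrank F (LinearMap.ker (W.dualRestrict.comp B)) + finrank F W = finrank F V := by
  have h1 := (W.dualRestrict.comp B).finrank_range_add_finrank_ker
  have hsurj : LinearMap.range (W.dualRestrict.comp B) = ⊤ :=
    LinearMap.range_eq_top.mpr ((Subspace.dualRestrict_surjective (W := W)).comp hB)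
  rw [hsurj, finrank_top] at h1
  have h2 : finrank F (Module.Dual F W) = finrank F W := Subspace.dual_finrank_eq
  omega

end AuxLemmas

set_option maxHeartbeats 2000000 in
set_option synthInstance.maxHeartbeats 400000 in
/-- In characteristic 2, if `x` is an isometry of a nonsingular quadratic form `Q` on `F^n`
with `x + I` invertible, then `n` is even and every isometry `y` of `Q` commuting with `x`
has `rank(y + I)` even (i.e. the centralizer of `x` lies in `Ω(Q)`, the kernel of the
spinor norm). -/
theorem centralizer_in_Omega_char_two
    {F : Type*} [Field F] [Fintype F] [CharP F 2] {n : ℕ}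
    (Q : (Fin n → F) → F)
    (hQsmul : ∀ (a : F) (v : Fin n → F), Q (a • v) = a ^ 2 * Q v)
    (hpolar_addl : ∀ u₁ u₂ v, QuadraticMap.polar Q (u₁ + u₂) v =
        QuadraticMap.polar Q u₁ v + QuadraticMap.polar Q u₂ v)
    (hpolar_smull : ∀ (a : F) (u v : Fin n → F),
        QuadraticMap.polar Q (a • u) v = a * QuadraticMap.polar Q u v)
    (hpolar_addr : ∀ u v₁ v₂, QuadraticMap.polar Q u (v₁ + v₂) =
        QuadraticMap.polar Q u v₁ + QuadraticMap.polar Q u v₂)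
    (hpolar_smulr : ∀ (a : F) (u v : Fin n → F),
        QuadraticMap.polar Q u (a • v) = a * QuadraticMap.polar Q u v)
    (hnd : ∀ v, (∀ u, QuadraticMap.polar Q v u = 0) → v = 0)
    (x : Matrix (Fin n) (Fin n) F) (hx : IsUnit x)
    (hxiso : ∀ v, Q (v ᵥ* x) = Q v)
    (hxpI : IsUnit (x + 1)) :
    Even n ∧
      ∀ y : Matrix (Fin n) (Fin n) F, IsUnit y → (∀ v, Q (v ᵥ* y) = Q v) →
        x * y = y * x → Even ((y + 1).rank) := by
  classical
  set β : (Fin n → F) →ₗ[F] (Fin n → F) →ₗ[F] F :=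
    LinearMap.mk₂ F (QuadraticMap.polar Q) hpolar_addl hpolar_smull hpolar_addr hpolar_smulr
    with hβdef
  have hβapp : ∀ u v, β u v = QuadraticMap.polar Q u v := fun u v => rfl
  have h2F : ∀ a : F, a + a = 0 := fun a => CharTwo.add_self_eq_zero a
  have hQ0 : Q 0 = 0 := by
    have h := hQsmul 0 0
    rw [zero_smul] at h
    simpa using h
  have hβsymm : ∀ u v, β u v = β v u := by
    intro u v
    simp only [hβapp, QuadraticMap.polar]
    rw [add_comm u v]
    ring
  have hβalt : ∀ v, β v v = 0 := by
    intro v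
    simp only [hβapp, QuadraticMap.polar]
    have hvv : v + v = 0 := by ext i; exact h2F (v i)
    rw [hvv, hQ0]
    linear_combination -(h2F (Q v))
  have hfinV : Module.finrank F (Fin n → F) = n := by
    rw [Module.finrank_pi, Fintype.card_fin]
  -- Part 1: n is even
  have hβker : LinearMap.ker β = ⊥ := by
    rw [LinearMap.ker_eq_bot']
    intro v hv
    apply hnd
    intro u
    have := congrArg (fun g => g u) hv
    simpa [hβapp] using this
  have hEvenn : Even n := by
    obtain ⟨m, hm⟩ := alt_aux (F := F) n (Fin n → F) inferInstance inferInstance inferInstance β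
      (le_of_eq hfinV) hβalt
    rw [hβker, finrank_bot, hfinV] at hm
    exact ⟨m, by omega⟩
  refine ⟨hEvenn, ?_⟩
  -- surjectivity of β onto the dual
  have hβsurj : Function.Surjective (β : (Fin n → F) →ₗ[F] Module.Dual F (Fin n → F)) := by
    have hinj : Function.Injective (β : (Fin n → F) →ₗ[F] Module.Dual F (Fin n → F)) := by
      rw [← LinearMap.ker_eq_bot]
      exact hβker
    exact (LinearMap.injective_iff_surjective_of_finrank_eq_finrank
      (Subspace.dual_finrank_eq).symm).mp hinj
  -- isometry invariance
  have hbiso : ∀ (g : Matrix (Fin n) (Fin n) F), (∀ v, Q (v ᵥ* g) = Q v) →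
      ∀ u v, β (u ᵥ* g) (v ᵥ* g) = β u v := by
    intro g hg u v
    simp only [hβapp, QuadraticMap.polar]
    rw [← Matrix.add_vecMul, hg, hg, hg]
  intro y hy hyiso hxy
  -- matrix setup
  have hdetxpI : IsUnit (x + 1).det := (Matrix.isUnit_iff_isUnit_det _).mp hxpI
  set T : Matrix (Fin n) (Fin n) F := (x + 1)⁻¹ with hTdef
  have hT1 : (x + 1) * T = 1 := Matrix.mul_nonsing_inv _ hdetxpI
  have hT2 : T * (x + 1) = 1 := Matrix.nonsing_inv_mul _ hdetxpI
  have hxy1 : (x + 1) * y = y * (x + 1) := by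
    rw [add_mul, mul_add, one_mul, mul_one, hxy]
  have hTy : T * y = y * T := by
    calc T * y = T * (y * ((x + 1) * T)) := by rw [hT1, mul_one]
    _ = T * ((y * (x + 1)) * T) := by rw [mul_assoc]
    _ = T * (((x + 1) * y) * T) := by rw [hxy1]
    _ = (T * (x + 1)) * (y * T) := by rw [mul_assoc, mul_assoc]
    _ = y * T := by rw [hT2, one_mul]
  set N : Matrix (Fin n) (Fin n) F := y + 1 with hNdef
  have hneg1 : (-1 : Matrix (Fin n) (Fin n) F) = 1 := by
    ext i k
    rw [Matrix.neg_apply]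
    exact CharTwo.neg_eq _
  have hNcomm : Commute N y := (Commute.refl y).add_left (Commute.one_left y)
  -- the auxiliary bilinear function c
  set cf : (Fin n → F) → (Fin n → F) → F := fun u v => β (u ᵥ* T) v with hcf
  have hβy : ∀ u v, β (u ᵥ* y) (v ᵥ* y) = β u v := hbiso y hyiso
  have hcy : ∀ u v, cf (u ᵥ* y) (v ᵥ* y) = cf u v := by
    intro u v
    show β ((u ᵥ* y) ᵥ* T) (v ᵥ* y) = β (u ᵥ* T) v
    rw [Matrix.vecMul_vecMul, ← hTy, ← Matrix.vecMul_vecMul, hβy]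
  have hcaddl : ∀ u u' v, cf (u + u') v = cf u v + cf u' v := by
    intro u u' v
    show β ((u + u') ᵥ* T) v = β (u ᵥ* T) v + β (u' ᵥ* T) v
    rw [Matrix.add_vecMul, map_add, LinearMap.add_apply]
  have hcaddr : ∀ u v v', cf u (v + v') = cf u v + cf u v' := fun u v v' => map_add _ _ _
  have hczero : ∀ u, cf u 0 = 0 := fun u => map_zero _
  have hβaddl : ∀ u u' v, β (u + u') v = β u v + β u' v := by
    intro u u' v
    rw [map_add, LinearMap.add_apply]
  have hβaddr : ∀ u v v', β u (v + v') = β u v + β u v' := fun u v v' => map_add _ _ _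
  -- the key identity : cf u v + cf v u = β u v
  have hkey : ∀ a w, β (a ᵥ* (x + 1)) w + β a (w ᵥ* (x + 1)) =
      β (a ᵥ* (x + 1)) (w ᵥ* (x + 1)) := by
    intro a w
    have hβx : ∀ u v, β (u ᵥ* x) (v ᵥ* x) = β u v := hbiso x hxiso
    rw [Matrix.vecMul_add, Matrix.vecMul_add, Matrix.vecMul_one, Matrix.vecMul_one]
    simp only [map_add, LinearMap.add_apply, hβx a w]
    ring
  have hcβ : ∀ u v, cf u v + cf v u = β u v := by
    intro u v
    have hu : (u ᵥ* T) ᵥ* (x + 1) = u := by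
      rw [Matrix.vecMul_vecMul, hT2, Matrix.vecMul_one]
    have hv : (v ᵥ* T) ᵥ* (x + 1) = v := by
      rw [Matrix.vecMul_vecMul, hT2, Matrix.vecMul_one]
    have h := hkey (u ᵥ* T) (v ᵥ* T)
    rw [hu, hv] at h
    calc cf u v + cf v u = β (u ᵥ* T) v + β u (v ᵥ* T) := by
          show β (u ᵥ* T) v + β (v ᵥ* T) u = _
          rw [hβsymm (v ᵥ* T) u]
    _ = β u (v ᵥ* T) + β (u ᵥ* T) v := add_comm _ _
    _ = β u v := h
  -- shuffle identities
  have shuffle1 : ∀ (φ : (Fin n → F) → (Fin n → F) → F),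
      (∀ u v, φ (u ᵥ* y) (v ᵥ* y) = φ u v) →
      (∀ u u' v, φ (u + u') v = φ u v + φ u' v) →
      (∀ u v v', φ u (v + v') = φ u v + φ u v') →
      ∀ u v, φ (u ᵥ* N) v = φ (u ᵥ* y) (v ᵥ* N) := by
    intro φ hinv haddl haddr u v
    have hNvec : ∀ w : Fin n → F, w ᵥ* N = w ᵥ* y + w := by
      intro w
      rw [hNdef, Matrix.vecMul_add, Matrix.vecMul_one]
    rw [hNvec u, haddl, ← hinv u v, hNvec v, haddr]
    exact add_comm _ _
  have shufflej : ∀ (φ : (Fin n → F) → (Fin n → F) → F),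
      (∀ u v, φ (u ᵥ* y) (v ᵥ* y) = φ u v) →
      (∀ u u' v, φ (u + u') v = φ u v + φ u' v) →
      (∀ u v v', φ u (v + v') = φ u v + φ u v') →
      ∀ (j : ℕ) (u v : Fin n → F), φ (u ᵥ* N ^ j) v = φ (u ᵥ* y ^ j) (v ᵥ* N ^ j) := by
    intro φ hinv haddl haddr j
    induction j with
    | zero => intro u v; simp only [pow_zero, Matrix.vecMul_one]
    | succ j ihj =>
      intro u v
      have h1 : u ᵥ* N ^ (j + 1) = (u ᵥ* N) ᵥ* N ^ j := by
        rw [Matrix.vecMul_vecMul, ← pow_succ']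
      rw [h1, ihj (u ᵥ* N) v]
      have h2 : (u ᵥ* N) ᵥ* y ^ j = (u ᵥ* y ^ j) ᵥ* N := by
        rw [Matrix.vecMul_vecMul, Matrix.vecMul_vecMul, (hNcomm.pow_right j).eq]
      rw [h2, shuffle1 φ hinv haddl haddr]
      rw [Matrix.vecMul_vecMul, Matrix.vecMul_vecMul, ← pow_succ, ← pow_succ]
  -- diagonal vanishing (this is where `x` is needed)
  have hdiag : ∀ (j : ℕ) (w : Fin n → F), w ᵥ* N ^ (j + 1) = 0 → β w (w ᵥ* N ^ j) = 0 := by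
    intro j w hw
    have h0 : β w (w ᵥ* N ^ j) = cf w (w ᵥ* N ^ j) + cf (w ᵥ* N ^ j) w := (hcβ _ _).symm
    have h1 : cf (w ᵥ* N ^ j) w = cf (w ᵥ* y ^ j) (w ᵥ* N ^ j) :=
      shufflej cf hcy hcaddl hcaddr j w w
    have hSN : (∑ i ∈ Finset.range j, y ^ i) * N = 1 + y ^ j := by
      have hg := geom_sum_mul y j
      have hy1 : y - 1 = N := by
        rw [hNdef, sub_eq_add_neg, hneg1]
      rw [hy1] at hg
      rw [hg, sub_eq_add_neg, hneg1, add_comm]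
    have h3 : w + w ᵥ* y ^ j = (w ᵥ* (∑ i ∈ Finset.range j, y ^ i)) ᵥ* N := by
      rw [Matrix.vecMul_vecMul, hSN, Matrix.vecMul_add, Matrix.vecMul_one]
    have h4 : (w ᵥ* N ^ j) ᵥ* N = 0 := by
      rw [Matrix.vecMul_vecMul, ← pow_succ]
      exact hw
    rw [h0, h1, ← hcaddl, h3, shuffle1 cf hcy hcaddl hcaddr, h4, hczero]
  -- orthogonality inclusion
  have hsβ : ∀ (j : ℕ) (u v : Fin n → F), β (u ᵥ* N ^ j) v = β (u ᵥ* y ^ j) (v ᵥ* N ^ j) :=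
    fun j u v => shufflej (fun a b => β a b) hβy hβaddl hβaddr j u v
  have hincl : ∀ (j : ℕ) (w a : Fin n → F), w ᵥ* N ^ j = 0 → β w (a ᵥ* N ^ j) = 0 := by
    intro j w a hw
    rw [hβsymm w (a ᵥ* N ^ j), hsβ j a w, hw]
    exact map_zero _
  -- the chain of submodules
  set e : ℕ → ((Fin n → F) →ₗ[F] (Fin n → F)) := fun j => Matrix.vecMulLinear (N ^ j) with he
  have heapp : ∀ (j : ℕ) (v : Fin n → F), e j v = v ᵥ* N ^ j := fun j v => rfl
  set Kj : ℕ → Submodule F (Fin n → F) :=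
    fun j => LinearMap.ker (e 1) ⊓ LinearMap.range (e j) with hKj
  have hmemK : ∀ (j : ℕ) (t : Fin n → F),
      t ∈ Kj j ↔ (t ᵥ* N = 0 ∧ ∃ a, a ᵥ* N ^ j = t) := by
    intro j t
    rw [hKj]
    simp only [Submodule.mem_inf, LinearMap.mem_ker, LinearMap.mem_range, heapp, pow_one]
  -- the parity step
  have hstep : ∀ j : ℕ, ∃ m, Module.finrank F (Kj j) = Module.finrank F (Kj (j + 1)) + 2 * m := by
    intro j
    set W : Submodule F (Fin n → F) := LinearMap.ker (e (j + 1)) with hWdef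
    have hmemW : ∀ t : Fin n → F, t ∈ W ↔ t ᵥ* N ^ (j + 1) = 0 := by
      intro t
      rw [hWdef, LinearMap.mem_ker, heapp]
    set b3 : (Fin n → F) →ₗ[F] (Fin n → F) →ₗ[F] F := (β.compl₂ (e j)).flip with hb3
    have hb3app : ∀ w z, b3 w z = β z (w ᵥ* N ^ j) := fun w z => rfl
    set bW : W →ₗ[F] W →ₗ[F] F := (b3.domRestrict W).compl₂ W.subtype with hbW
    have hbWapp : ∀ (w z : W), bW w z = β (z : Fin n → F) ((w : Fin n → F) ᵥ* N ^ j) :=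
      fun w z => rfl
    have hbWalt : ∀ w : W, bW w w = 0 := by
      intro w
      rw [hbWapp]
      exact hdiag j (w : Fin n → F) ((hmemW _).mp w.2)
    obtain ⟨m, hm⟩ := alt_aux (F := F) (Module.finrank F W) W inferInstance inferInstance
      inferInstance bW le_rfl hbWalt
    -- identify the orthogonal complement of W
    have horth := orth_dim β hβsurj W
    set Z : Submodule F (Fin n → F) := LinearMap.ker (W.dualRestrict.comp β) with hZdef
    have hZmem : ∀ t, t ∈ Z ↔ ∀ w : W, β t (w : Fin n → F) = 0 := by
      intro t
      rw [hZdef, LinearMap.mem_ker]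
      constructor
      · intro h w
        have := congrArg (fun g => g w) h
        simpa using this
      · intro h
        apply LinearMap.ext
        intro w
        simp only [LinearMap.comp_apply, Submodule.dualRestrict_apply, LinearMap.zero_apply]
        exact h w
    have hZle : LinearMap.range (e (j + 1)) ≤ Z := by
      rintro t ⟨a, rfl⟩
      rw [hZmem]
      intro w
      rw [hβsymm]
      exact hincl (j + 1) (w : Fin n → F) a ((hmemW _).mp w.2)
    have hZeq : Z = LinearMap.range (e (j + 1)) := by
      symm
      apply Submodule.eq_of_le_of_finrank_eq hZle
      have h1 := (e (j + 1)).finrank_range_add_finrank_ker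
      have h1' : Module.finrank F (LinearMap.range (e (j + 1))) + Module.finrank F W =
          Module.finrank F (Fin n → F) := h1
      omega
    set Rad : Submodule F (Fin n → F) :=
      W ⊓ Submodule.comap (e j) (LinearMap.range (e (j + 1))) with hRad
    have hmemRad : ∀ t : Fin n → F,
        t ∈ Rad ↔ t ∈ W ∧ (t ᵥ* N ^ j) ∈ LinearMap.range (e (j + 1)) := by
      intro t
      rw [hRad]
      simp only [Submodule.mem_inf, Submodule.mem_comap, heapp]
    have hkerbW : LinearMap.ker bW = Submodule.comap W.subtype Rad := by
      ext w
      rw [LinearMap.mem_ker, Submodule.mem_comap, Submodule.coe_subtype, hmemRad]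
      constructor
      · intro h
        refine ⟨w.2, ?_⟩
        rw [← hZeq, hZmem]
        intro z
        have := congrArg (fun g => g z) h
        simp only [hbWapp, LinearMap.zero_apply] at this
        rw [hβsymm]
        exact this
      · rintro ⟨hwW, hcom⟩
        apply LinearMap.ext
        intro z
        rw [LinearMap.zero_apply, hbWapp]
        have hmem : ((w : Fin n → F) ᵥ* N ^ j) ∈ Z := by
          rw [hZeq]
          exact hcom
        rw [hβsymm]
        exact (hZmem _).mp hmem z
    have hRadle : Rad ≤ W := inf_le_left
    have hfr1 : Module.finrank F (LinearMap.ker bW) = Module.finrank F Rad := by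
      rw [hkerbW]
      exact LinearEquiv.finrank_eq (Submodule.comapSubtypeEquivOfLe hRadle)
    have hkerlemma : ∀ t : Fin n → F, t ᵥ* N ^ j = 0 → t ∈ W := by
      intro t ht
      rw [hmemW, pow_succ, ← Matrix.vecMul_vecMul, ht, Matrix.zero_vecMul]
    -- finrank Rad = finrank ker (e j) + finrank (Kj (j+1))
    have hrank1 : Module.finrank F Rad =
        Module.finrank F (LinearMap.ker (e j)) + Module.finrank F (Kj (j + 1)) := by
      have h := ((e j).comp Rad.subtype).finrank_range_add_finrank_ker
      have hrange : LinearMap.range ((e j).comp Rad.subtype) = Kj (j + 1) := by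
        rw [LinearMap.range_comp, Submodule.range_subtype]
        apply le_antisymm
        · intro t ht
          obtain ⟨w, hwRad, rfl⟩ := Submodule.mem_map.mp ht
          rw [hmemRad] at hwRad
          obtain ⟨hwW, hwcom⟩ := hwRad
          rw [hmemK]
          constructor
          · show (w ᵥ* N ^ j) ᵥ* N = 0
            rw [Matrix.vecMul_vecMul, ← pow_succ]
            exact (hmemW _).mp hwW
          · obtain ⟨a, ha⟩ := hwcom
            exact ⟨a, ha⟩
        · intro t ht
          rw [hmemK] at ht
          obtain ⟨ht1, a, ha⟩ := ht
          refine Submodule.mem_map.mpr ⟨a ᵥ* N, ?_, ?_⟩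
          · rw [hmemRad]
            constructor
            · rw [hmemW, Matrix.vecMul_vecMul, ← pow_succ']
              show a ᵥ* (N ^ (j + 2)) = 0
              rw [pow_succ, ← Matrix.vecMul_vecMul, ha]
              exact ht1
            · rw [Matrix.vecMul_vecMul, ← pow_succ', ha]
              exact ⟨a, ha⟩
          · show (a ᵥ* N) ᵥ* N ^ j = t
            rw [Matrix.vecMul_vecMul, ← pow_succ', ha]
      have hker : LinearMap.ker ((e j).comp Rad.subtype) =
          Submodule.comap Rad.subtype (LinearMap.ker (e j)) := LinearMap.ker_comp _ _
      have hle2 : LinearMap.ker (e j) ≤ Rad := by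
        intro t ht
        rw [LinearMap.mem_ker, heapp] at ht
        rw [hmemRad]
        exact ⟨hkerlemma t ht, by rw [ht]; exact Submodule.zero_mem _⟩
      rw [hrange, hker] at h
      have hcfr : Module.finrank F (Submodule.comap Rad.subtype (LinearMap.ker (e j))) =
          Module.finrank F (LinearMap.ker (e j)) :=
        LinearEquiv.finrank_eq (Submodule.comapSubtypeEquivOfLe hle2)
      rw [hcfr] at h
      omega
    -- finrank W = finrank ker (e j) + finrank (Kj j)
    have hrank2 : Module.finrank F W =
        Module.finrank F (LinearMap.ker (e j)) + Module.finrank F (Kj j) := by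
      have h := ((e j).comp W.subtype).finrank_range_add_finrank_ker
      have hrange : LinearMap.range ((e j).comp W.subtype) = Kj j := by
        rw [LinearMap.range_comp, Submodule.range_subtype]
        apply le_antisymm
        · intro t ht
          obtain ⟨w, hwW, rfl⟩ := Submodule.mem_map.mp ht
          rw [hmemK]
          constructor
          · show (w ᵥ* N ^ j) ᵥ* N = 0
            rw [Matrix.vecMul_vecMul, ← pow_succ]
            exact (hmemW _).mp hwW
          · exact ⟨w, rfl⟩
        · intro t ht
          rw [hmemK] at ht
          obtain ⟨ht1, a, ha⟩ := ht
          refine Submodule.mem_map.mpr ⟨a, ?_, ha⟩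
          rw [hmemW, pow_succ, ← Matrix.vecMul_vecMul, ha]
          exact ht1
      have hker : LinearMap.ker ((e j).comp W.subtype) =
          Submodule.comap W.subtype (LinearMap.ker (e j)) := LinearMap.ker_comp _ _
      have hle2 : LinearMap.ker (e j) ≤ W := by
        intro t ht
        rw [LinearMap.mem_ker, heapp] at ht
        exact hkerlemma t ht
      rw [hrange, hker] at h
      have hcfr : Module.finrank F (Submodule.comap W.subtype (LinearMap.ker (e j))) =
          Module.finrank F (LinearMap.ker (e j)) :=
        LinearEquiv.finrank_eq (Submodule.comapSubtypeEquivOfLe hle2)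
      rw [hcfr] at h
      omega
    exact ⟨m, by omega⟩
  -- Fitting : Kj j = ⊥ for large j
  set f : (Fin n → F) →ₗ[F] (Fin n → F) := Matrix.vecMulLinear N with hfN
  have hfpow : ∀ (m : ℕ) (v : Fin n → F), (f ^ m) v = v ᵥ* N ^ m := by
    intro m
    induction m with
    | zero => intro v; simp only [pow_zero, Module.End.one_apply, Matrix.vecMul_one]
    | succ m ihm =>
      intro v
      rw [pow_succ', Module.End.mul_apply, ihm]
      show (v ᵥ* N ^ m) ᵥ* N = v ᵥ* N ^ (m + 1)
      rw [Matrix.vecMul_vecMul, ← pow_succ]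
  obtain ⟨J0, hJ0⟩ := Filter.eventually_atTop.mp (Module.End.eventually_disjoint_ker_pow_range_pow f)
  have hKbot : ∀ j : ℕ, J0 + 1 ≤ j → Kj j = ⊥ := by
    intro j hj
    have hd := hJ0 j (by omega)
    rw [Submodule.eq_bot_iff]
    intro t ht
    rw [hmemK] at ht
    obtain ⟨ht1, a, ha⟩ := ht
    obtain ⟨i, rfl⟩ : ∃ i, j = i + 1 := ⟨j - 1, by omega⟩
    have htk : t ∈ LinearMap.ker (f ^ (i + 1)) := by
      rw [LinearMap.mem_ker, hfpow, pow_succ', ← Matrix.vecMul_vecMul, ht1, Matrix.zero_vecMul]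
    have htr : t ∈ LinearMap.range (f ^ (i + 1)) := by
      rw [LinearMap.mem_range]
      exact ⟨a, by rw [hfpow]; exact ha⟩
    exact Submodule.disjoint_def.mp hd t htk htr
  -- descending induction
  have hmain : ∀ (d j : ℕ), J0 + 1 ≤ j + d → Even (Module.finrank F (Kj j)) := by
    intro d
    induction d with
    | zero =>
      intro j hj
      rw [hKbot j (by omega), finrank_bot]
      exact Even.zero
    | succ d ihd =>
      intro j hj
      by_cases hc : J0 + 1 ≤ j + d
      · exact ihd j hc
      · obtain ⟨m, hm⟩ := hstep j
        have hnext := ihd (j + 1) (by omega)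
        rw [hm]
        exact hnext.add (even_two_mul m)
  have hK0 : Even (Module.finrank F (Kj 0)) := hmain (J0 + 1) 0 (by omega)
  have hKj0 : Kj 0 = LinearMap.ker (e 1) := by
    simp only [hKj]
    have : LinearMap.range (e 0) = ⊤ := by
      rw [LinearMap.range_eq_top]
      intro v
      exact ⟨v, by rw [heapp, pow_zero, Matrix.vecMul_one]⟩
    rw [this, inf_top_eq]
  rw [hKj0] at hK0
  -- conclude
  have he1N : e 1 = Matrix.vecMulLinear N := by
    simp only [he]
    rw [pow_one]
  have htrans : N.rank = Module.finrank F (LinearMap.range (e 1)) := by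
    rw [he1N, ← Matrix.rank_transpose, Matrix.rank, Matrix.mulVecLin_transpose]
  have hrn2 := (e 1).finrank_range_add_finrank_ker
  rw [hfinV] at hrn2
  have hEvenKer : Even (Module.finrank F (LinearMap.ker (e 1))) := hK0
  have : Even ((y + 1).rank) := by
    show Even (N.rank)
    rw [htrans]
    have hEn := hEvenn
    rw [← hrn2] at hEn
    exact (Nat.even_add.mp hEn).mpr hEvenKer
  exact this
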